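/- Fix α ∈ [0, 2]. The infinite product E(z) = (z + i) ∏_{n=1}^∞ (1 − z/(n − i n^{−α})) (1 + z/(n + i n^{−α})) converges locally uniformly on ℂ, defining an entire function, and for every ε > 0 there exist constants 0 < c ≤ C such that c·e^{π Im z} ≤ |E(z)| ≤ C·e^{π Im z} whenever Im z ≥ ε. -/

import Mathlib

open Filter Finset Complex Topology

namespace Stmt15Aux

noncomputable def Complex.abs : AbsoluteValue ℂ ℝ where
  toFun := fun z => ‖z‖
  map_mul' := norm_mul
  nonneg' := norm_nonneg
  eq_zero' := fun _ => norm_eq_zero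
  add_le' := norm_add_le

lemma Complex.abs_apply (z : ℂ) : Complex.abs z = Real.sqrt (Complex.normSq z) := Complex.norm_def z

@[simp] lemma Complex.abs_I : Complex.abs Complex.I = 1 := Complex.norm_I

@[simp] lemma Complex.abs_two : Complex.abs (2:ℂ) = 2 := Complex.norm_two

@[simp] lemma Complex.abs_ofReal (r : ℝ) : Complex.abs (r:ℂ) = |r| := Complex.norm_real r

lemma Complex.abs_exp (z : ℂ) : Complex.abs (Complex.exp z) = Real.exp z.re := Complex.norm_exp z

lemma Complex.continuous_abs : Continuous Complex.abs := continuous_norm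

lemma Complex.norm_eq_abs (z : ℂ) : ‖z‖ = Complex.abs z := rfl

lemma Complex.abs.sub_le_add (a b : ℂ) : Complex.abs (a - b) ≤ Complex.abs a + Complex.abs b :=
  norm_sub_le a b

/-- Key product inequality: |∏ g - 1| ≤ ∏(1+|g-1|) - 1. -/

lemma prod_sub_one_abs_le (s : Finset ℕ) (g : ℕ → ℂ) :
    Complex.abs (∏ i ∈ s, g i - 1) ≤ ∏ i ∈ s, (1 + Complex.abs (g i - 1)) - 1 := by
  induction s using Finset.cons_induction with
  | empty => simp
  | cons a s ha ih =>
    rw [Finset.prod_cons, Finset.prod_cons]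
    have hX : (1:ℝ) ≤ ∏ i ∈ s, (1 + Complex.abs (g i - 1)) := by
      calc (1:ℝ) = ∏ _i ∈ s, (1:ℝ) := by simp
      _ ≤ ∏ i ∈ s, (1 + Complex.abs (g i - 1)) :=
        Finset.prod_le_prod (fun i _ => by norm_num)
          (fun i _ => by linarith [Complex.abs.nonneg (g i - 1)])
    have h1 : g a * ∏ i ∈ s, g i - 1
        = g a * (∏ i ∈ s, g i - 1) + (g a - 1) := by ring
    rw [h1]
    calc Complex.abs (g a * (∏ i ∈ s, g i - 1) + (g a - 1))
        ≤ Complex.abs (g a) * Complex.abs (∏ i ∈ s, g i - 1)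
            + Complex.abs (g a - 1) := by
          refine (Complex.abs.add_le _ _).trans ?_
          rw [map_mul]
      _ ≤ (1 + Complex.abs (g a - 1)) * (∏ i ∈ s, (1 + Complex.abs (g i - 1)) - 1)
            + Complex.abs (g a - 1) := by
          have hga : Complex.abs (g a) ≤ 1 + Complex.abs (g a - 1) := by
            calc Complex.abs (g a) = Complex.abs (1 + (g a - 1)) := by ring_nf
            _ ≤ Complex.abs (1:ℂ) + Complex.abs (g a - 1) := Complex.abs.add_le _ _
            _ = 1 + Complex.abs (g a - 1) := by simp
          have h0 : (0:ℝ) ≤ ∏ i ∈ s, (1 + Complex.abs (g i - 1)) - 1 := by linarith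
          exact add_le_add (mul_le_mul hga ih (Complex.abs.nonneg _) (by positivity)) le_rfl
      _ = (1 + Complex.abs (g a - 1)) * ∏ i ∈ s, (1 + Complex.abs (g i - 1)) - 1 := by ring

lemma one_add_le_exp {x : ℝ} : 1 + x ≤ Real.exp x := by
  have := Real.add_one_le_exp x; linarith

/-- ∏(1+aᵢ) ≤ exp (∑ aᵢ) for nonneg aᵢ -/

lemma prod_one_add_le_exp (s : Finset ℕ) (a : ℕ → ℝ) (ha : ∀ i, 0 ≤ a i) :
    ∏ i ∈ s, (1 + a i) ≤ Real.exp (∑ i ∈ s, a i) := by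
  rw [Real.exp_sum]
  exact Finset.prod_le_prod (fun i _ => by linarith [ha i]) (fun i _ => one_add_le_exp)

/-- sqrt ratio bound -/

lemma sqrt_ratio_le (B p q y : ℝ) (hB : 0 ≤ B) (hy : 0 < y) (hyp : y ≤ p) (hpq : p ≤ q)
    (hq : q ≤ y + 1) :
    Real.sqrt (B + q^2) ≤ Real.sqrt (B + p^2) * Real.exp ((y+1)/(B+y^2)) := by
  have hBy : 0 < B + y^2 := by positivity
  have hp0 : 0 < p := lt_of_lt_of_le hy hyp
  have hp2q2 : p^2 ≤ q^2 := pow_le_pow_left₀ hp0.le hpq 2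
  have hBp : 0 < B + p^2 := by positivity
  have hs : (q^2 - p^2)/(B+p^2) ≤ 2*((y+1)/(B+y^2)) := by
    rw [div_le_iff₀ hBp]
    have h1 : q^2 - p^2 ≤ 2*(y+1) := by nlinarith
    have h2 : (B+y^2) ≤ (B+p^2) := by nlinarith
    rw [mul_comm 2 _, mul_assoc, div_mul_eq_mul_div, le_div_iff₀ hBy]
    nlinarith [mul_le_mul_of_nonneg_left h2 (by linarith : (0:ℝ) ≤ q^2 - p^2)]

  have key : B + q^2 ≤ (B + p^2) * (Real.exp ((y+1)/(B+y^2)))^2 := by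
    have : B + q^2 ≤ (B+p^2) * (1 + (q^2-p^2)/(B+p^2)) := by
      rw [mul_add, mul_one, mul_div_cancel₀ _ (ne_of_gt hBp)]; linarith
    refine this.trans ?_
    have := one_add_le_exp (x := (q^2-p^2)/(B+p^2))
    have h3 : Real.exp ((q^2-p^2)/(B+p^2)) ≤ (Real.exp ((y+1)/(B+y^2)))^2 := by
      rw [← Real.exp_nat_mul]
      · exact Real.exp_le_exp.2 (by push_cast; linarith)
    nlinarith [Real.exp_pos ((q^2-p^2)/(B+p^2)), hBp.le]
  calc Real.sqrt (B + q^2) ≤ Real.sqrt ((B + p^2) * (Real.exp ((y+1)/(B+y^2)))^2) :=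
        Real.sqrt_le_sqrt key
    _ = Real.sqrt (B + p^2) * Real.exp ((y+1)/(B+y^2)) := by
        rw [Real.sqrt_mul hBp.le, Real.sqrt_sq (Real.exp_pos _).le]

lemma summable_inv_sq_add_one : Summable (fun j : ℕ => 1/((j:ℝ)+1)^2) := by
  have h : Summable (fun n : ℕ => 1/(n:ℝ)^2) := Real.summable_one_div_nat_pow.2 one_lt_two
  have := (summable_nat_add_iff (f := fun n : ℕ => 1/(n:ℝ)^2) 1).2 h
  refine this.congr fun n => by push_cast; ring

lemma sum_inv_succ_sq_le (m : ℕ) : ∑ n ∈ range m, 1/((n:ℝ)+1)^2 ≤ 2 := by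
  set g : ℕ → ℝ := fun k => 2/((k:ℝ)+1) with hg
  have key : ∀ n : ℕ, 1/((n:ℝ)+1)^2 ≤ g n - g (n+1) := by
    intro n
    have h1 : (0:ℝ) < (n:ℝ)+1 := by positivity
    have h2 : (0:ℝ) < (n:ℝ)+2 := by positivity
    have : g n - g (n+1) = 2/(((n:ℝ)+1)*((n:ℝ)+2)) := by
      simp only [hg]; push_cast
      field_simp
      ring
    rw [this, div_le_div_iff₀ (by positivity) (by positivity)]
    nlinarith
  calc ∑ n ∈ range m, 1/((n:ℝ)+1)^2 ≤ ∑ n ∈ range m, (g n - g (n+1)) :=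
        Finset.sum_le_sum fun n _ => key n
    _ = g 0 - g m := Finset.sum_range_sub' g m
    _ ≤ 2 := by
        have : 0 ≤ g m := by positivity
        simp only [hg]; norm_num
        positivity

/-- Summability of 1/(j²+y²) -/

lemma summable_v (y : ℝ) (hy : 0 < y) : Summable (fun j : ℕ => 1/((j:ℝ)^2 + y^2)) := by
  rw [← summable_nat_add_iff 1]
  refine Summable.of_nonneg_of_le (fun j => by positivity) (fun j => ?_) summable_inv_sq_add_one
  have h1 : ((j:ℝ)+1)^2 ≤ ((j+1:ℕ):ℝ)^2 + y^2 := by push_cast; nlinarith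
  exact one_div_le_one_div_of_le (by positivity) h1

/-- tsum of 1/(j²+y²) is at most 2/y + 3/y². -/

lemma tsum_v_le (y : ℝ) (hy : 0 < y) : ∑' j : ℕ, 1/((j:ℝ)^2 + y^2) ≤ 2/y + 3/y^2 := by
  set v : ℕ → ℝ := fun j => 1/((j:ℝ)^2 + y^2) with hv
  have hsv : Summable v := summable_v y hy
  set K : ℕ := ⌈y⌉₊ + 1 with hK
  have hK1 : 1 ≤ K := by omega
  have hKy : y ≤ (K:ℝ) := by
    push_cast [hK]; exact (Nat.le_ceil y).trans (by norm_num)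
  have hKy2 : (K:ℝ) < y + 2 := by
    push_cast [hK]
    have := Nat.ceil_lt_add_one hy.le
    linarith
  -- split
  have hsplit := Summable.sum_add_tsum_nat_add (f := v) (K+1) hsv
  -- head bound
  have hhead : ∑ i ∈ range (K+1), v i ≤ ((K:ℝ)+1)/y^2 := by
    calc ∑ i ∈ range (K+1), v i ≤ ∑ _i ∈ range (K+1), 1/y^2 :=
          Finset.sum_le_sum fun i _ => by
            simp only [hv]
            exact one_div_le_one_div_of_le (by positivity)
              (le_add_of_nonneg_left (by positivity))
      _ = ((K:ℝ)+1)/y^2 := by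
          rw [Finset.sum_const, Finset.card_range]; push_cast; ring
  -- tail bound
  set w : ℕ → ℝ := fun j => 1/(((j:ℝ)+K)*((j:ℝ)+K+1)) with hw
  have hwle : ∀ j : ℕ, w j ≤ 1/((j:ℝ)+1)^2 := by
    intro j
    have h1 : ((j:ℝ)+1)^2 ≤ ((j:ℝ)+K)*((j:ℝ)+K+1) := by
      have : (1:ℝ) ≤ (K:ℝ) := by exact_mod_cast hK1
      nlinarith
    exact one_div_le_one_div_of_le (by positivity) h1
  have hsw : Summable w :=
    Summable.of_nonneg_of_le (fun j => by positivity) hwle summable_inv_sq_add_one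
  have htailw : ∀ j : ℕ, v (j+(K+1)) ≤ w j := by
    intro j
    simp only [hv, hw]
    have h1 : ((j:ℝ)+K)*((j:ℝ)+K+1) ≤ ((j+(K+1):ℕ):ℝ)^2 + y^2 := by
      push_cast; nlinarith
    exact one_div_le_one_div_of_le (by positivity) h1
  have hwsum : ∑' j, w j ≤ 1/K := by
    refine Summable.tsum_le_of_sum_range_le hsw fun n => ?_
    set g : ℕ → ℝ := fun j => 1/((j:ℝ)+K) with hg
    have : ∀ j ∈ range n, w j = g j - g (j+1) := by
      intro j _
      simp only [hw, hg]
      have h1 : (0:ℝ) < (j:ℝ)+K := by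
        have : (1:ℝ) ≤ (K:ℝ) := by exact_mod_cast hK1
        linarith
      have h2 : (0:ℝ) < (j:ℝ)+K+1 := by linarith
      push_cast at h1 h2 ⊢
      field_simp
      ring_nf
    rw [Finset.sum_congr rfl this, Finset.sum_range_sub' g n]
    have hgn : 0 ≤ g n := by
      simp only [hg]
      have : (1:ℝ) ≤ (K:ℝ) := by exact_mod_cast hK1
      positivity
    have hg0 : g 0 = 1/(K:ℝ) := by simp [hg]
    linarith
  have htail : ∑' j, v (j+(K+1)) ≤ 1/K := by
    refine le_trans (Summable.tsum_le_tsum htailw ((summable_nat_add_iff (K+1)).2 hsv) hsw) hwsum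
  have hKinv : 1/(K:ℝ) ≤ 1/y := by
    exact one_div_le_one_div_of_le hy hKy
  have hv0 : ∀ i, 0 ≤ v i := fun i => by positivity
  have heq : (y+3)/y^2 = 1/y + 3/y^2 := by field_simp
  calc ∑' j, v j = ∑ i ∈ range (K+1), v i + ∑' j, v (j+(K+1)) := hsplit.symm
    _ ≤ ((K:ℝ)+1)/y^2 + 1/(K:ℝ) := add_le_add hhead htail
    _ ≤ (y+3)/y^2 + 1/y := by
        refine add_le_add ((div_le_div_iff_of_pos_right (by positivity)).2 (by linarith)) hKinv
    _ = 2/y + 3/y^2 := by rw [heq]; ring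

/-- Shifted quadratic sum bound: partial sums of 1/((a+n)²+y²) are at most 2·∑' 1/(j²+y²). -/

lemma sum_shift_le (a y : ℝ) (hy : 0 < y) (hsv : Summable (fun j : ℕ => 1/((j:ℝ)^2 + y^2)))
    (m : ℕ) :
    ∑ n ∈ range m, 1/((a+(n:ℝ))^2 + y^2) ≤ 2 * ∑' j : ℕ, 1/((j:ℝ)^2 + y^2) := by
  set v : ℕ → ℝ := fun j => 1/((j:ℝ)^2 + y^2) with hv
  have hv0 : ∀ i, 0 ≤ v i := fun i => by positivity
  set n₀ : ℕ := ⌈-a⌉₊ with hn₀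
  have ha : -a ≤ (n₀:ℝ) := Nat.le_ceil _
  -- pointwise bounds
  have hbig : ∀ n : ℕ, n₀ ≤ n → 1/((a+(n:ℝ))^2 + y^2) ≤ v (n - n₀) := by
    intro n hn
    have hc : ((n - n₀ : ℕ):ℝ) = (n:ℝ) - (n₀:ℝ) := by
      push_cast [Nat.cast_sub hn]; ring
    have h0 : (0:ℝ) ≤ (n:ℝ) - (n₀:ℝ) := by
      have : (n₀:ℝ) ≤ (n:ℝ) := by exact_mod_cast hn
      linarith
    have h1 : (n:ℝ) - (n₀:ℝ) ≤ a + (n:ℝ) := by linarith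
    have h2 : ((n - n₀:ℕ):ℝ)^2 ≤ (a+(n:ℝ))^2 := by
      rw [hc]; nlinarith
    simp only [hv]
    exact one_div_le_one_div_of_le (by positivity) (by linarith)
  have hsmall : ∀ n : ℕ, n < n₀ → 1/((a+(n:ℝ))^2 + y^2) ≤ v (n₀ - 1 - n) := by
    intro n hn
    have hn₀pos : 1 ≤ n₀ := by omega
    have hlt : ((n₀ - 1:ℕ):ℝ) < -a := by
      have := (Nat.lt_ceil (n := n₀ - 1) (a := -a)).1 (by omega)
      exact this
    have hc : ((n₀ - 1 - n : ℕ):ℝ) = (n₀:ℝ) - 1 - (n:ℝ) := by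
      have h3 : ((n₀ - 1:ℕ):ℝ) = (n₀:ℝ) - 1 := by
        push_cast [Nat.cast_sub hn₀pos]; ring
      rw [Nat.cast_sub (by omega), h3]
    have h0 : (0:ℝ) ≤ (n₀:ℝ) - 1 - (n:ℝ) := by
      have : (n:ℝ) ≤ (n₀:ℝ) - 1 := by
        have : (n:ℝ) + 1 ≤ (n₀:ℝ) := by exact_mod_cast hn
        linarith
      linarith
    have h1 : (n₀:ℝ) - 1 - (n:ℝ) ≤ -(a + (n:ℝ)) := by
      have h3 : ((n₀ - 1:ℕ):ℝ) = (n₀:ℝ) - 1 := by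
        push_cast [Nat.cast_sub hn₀pos]; ring
      rw [h3] at hlt; linarith
    have h2 : ((n₀ - 1 - n:ℕ):ℝ)^2 ≤ (a+(n:ℝ))^2 := by
      rw [hc]
      calc ((n₀:ℝ) - 1 - (n:ℝ))^2 ≤ (-(a + (n:ℝ)))^2 := by nlinarith
        _ = (a+(n:ℝ))^2 := by ring
    simp only [hv]
    exact one_div_le_one_div_of_le (by positivity) (by linarith)
  -- split the sum
  rw [← Finset.sum_filter_add_sum_filter_not (range m) (fun n => n < n₀)]
  have hA : ∑ n ∈ (range m).filter (fun n => n < n₀), 1/((a+(n:ℝ))^2 + y^2)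
      ≤ ∑' j, v j := by
    calc ∑ n ∈ (range m).filter (fun n => n < n₀), 1/((a+(n:ℝ))^2 + y^2)
        ≤ ∑ n ∈ (range m).filter (fun n => n < n₀), v (n₀ - 1 - n) :=
          Finset.sum_le_sum fun n hn => hsmall n (Finset.mem_filter.1 hn).2
      _ = ∑ k ∈ ((range m).filter (fun n => n < n₀)).image (fun n => n₀ - 1 - n), v k := by
          rw [Finset.sum_image]
          intro x hx y' hy' hxy
          have hx' := (Finset.mem_filter.1 hx).2
          have hy'' := (Finset.mem_filter.1 hy').2
          simp only at hxy
          omega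
      _ ≤ ∑' j, v j := Summable.sum_le_tsum _ (fun i _ => hv0 i) hsv
  have hB : ∑ n ∈ (range m).filter (fun n => ¬ n < n₀), 1/((a+(n:ℝ))^2 + y^2)
      ≤ ∑' j, v j := by
    calc ∑ n ∈ (range m).filter (fun n => ¬ n < n₀), 1/((a+(n:ℝ))^2 + y^2)
        ≤ ∑ n ∈ (range m).filter (fun n => ¬ n < n₀), v (n - n₀) :=
          Finset.sum_le_sum fun n hn => hbig n (by
            have := (Finset.mem_filter.1 hn).2; omega)
      _ = ∑ k ∈ ((range m).filter (fun n => ¬ n < n₀)).image (fun n => n - n₀), v k := by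
          rw [Finset.sum_image]
          intro x hx y' hy' hxy
          have hx' := (Finset.mem_filter.1 hx).2
          have hy'' := (Finset.mem_filter.1 hy').2
          simp only at hxy
          omega
      _ ≤ ∑' j, v j := Summable.sum_le_tsum _ (fun i _ => hv0 i) hsv
  linarith

/-- |sin w| ≤ exp (im w) for im w ≥ 0. -/

lemma abs_sin_le {w : ℂ} (hw : 0 ≤ w.im) : Complex.abs (Complex.sin w) ≤ Real.exp w.im := by
  have hsin : Complex.sin w = (Complex.exp (-w * Complex.I) - Complex.exp (w * Complex.I))
      * Complex.I / 2 := rfl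
  rw [hsin]
  rw [map_div₀, map_mul, Complex.abs_I, mul_one, Complex.abs_two]
  have h1 : Complex.abs (Complex.exp (-w * Complex.I) - Complex.exp (w * Complex.I))
      ≤ Real.exp w.im + Real.exp (-w.im) := by
    refine (Complex.abs.sub_le_add _ _).trans ?_
    rw [Complex.abs_exp, Complex.abs_exp]
    simp [Complex.mul_I_re]
  have h2 : Real.exp (-w.im) ≤ Real.exp w.im := Real.exp_le_exp.2 (by linarith)
  rw [div_le_iff₀ (by norm_num : (0:ℝ) < 2)]
  linarith

/-- lower bound for |sin w| when im w ≥ π. -/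

lemma le_abs_sin {w : ℂ} (hw : Real.pi ≤ w.im) :
    (1 - Real.exp (-2*Real.pi))/2 * Real.exp w.im ≤ Complex.abs (Complex.sin w) := by
  have hsin : Complex.sin w = (Complex.exp (-w * Complex.I) - Complex.exp (w * Complex.I))
      * Complex.I / 2 := rfl
  rw [hsin, map_div₀, map_mul, Complex.abs_I, mul_one, Complex.abs_two]
  have hre1 : Complex.abs (Complex.exp (-w * Complex.I)) = Real.exp w.im := by
    rw [Complex.abs_exp]; simp [Complex.mul_I_re]
  have hre2 : Complex.abs (Complex.exp (w * Complex.I)) = Real.exp (-w.im) := by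
    rw [Complex.abs_exp]; simp [Complex.mul_I_re]
  have h1 : Real.exp w.im - Real.exp (-w.im)
      ≤ Complex.abs (Complex.exp (-w * Complex.I) - Complex.exp (w * Complex.I)) := by
    have := Complex.abs.le_sub (Complex.exp (-w * Complex.I)) (Complex.exp (w * Complex.I))
    rw [hre1, hre2] at this
    linarith [this]
  have h2 : Real.exp (-w.im) ≤ Real.exp (-2*Real.pi) * Real.exp w.im := by
    rw [← Real.exp_add]
    exact Real.exp_le_exp.2 (by linarith)
  linarith

variable {N t : ℝ} {z : ℂ}

lemma d1_ne (hN : 1 ≤ N) : ((N:ℂ) - Complex.I*(t:ℂ)) ≠ 0 := by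
  intro h
  have := congrArg Complex.re h
  simp [Complex.sub_re, Complex.mul_re] at this
  linarith

lemma d2_ne (hN : 1 ≤ N) : ((N:ℂ) + Complex.I*(t:ℂ)) ≠ 0 := by
  intro h
  have := congrArg Complex.re h
  simp [Complex.add_re, Complex.mul_re] at this
  linarith

lemma dprod (N t : ℝ) : ((N:ℂ) - Complex.I*(t:ℂ)) * ((N:ℂ) + Complex.I*(t:ℂ))
    = ((N^2+t^2 : ℝ):ℂ) := by
  have h : (Complex.I)^2 = -1 := Complex.I_sq
  push_cast
  ring_nf
  rw [h]
  ring

lemma fac_eq (hN : 1 ≤ N) (z : ℂ) :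
    (1 - z/((N:ℂ) - Complex.I*(t:ℂ))) * (1 + z/((N:ℂ) + Complex.I*(t:ℂ)))
      = (((N:ℂ) - Complex.I*(t:ℂ) - z) * (((N:ℂ) + Complex.I*(t:ℂ)) + z))
          / ((N^2+t^2 : ℝ):ℂ) := by
  rw [← dprod N t]
  field_simp [d1_ne hN, d2_ne hN]

lemma abs_fac_eq (hN : 1 ≤ N) (ht0 : 0 ≤ t) (z : ℂ) :
    Complex.abs ((1 - z/((N:ℂ) - Complex.I*(t:ℂ))) * (1 + z/((N:ℂ) + Complex.I*(t:ℂ))))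
      = Real.sqrt ((N-z.re)^2+(z.im+t)^2) * Real.sqrt ((N+z.re)^2+(z.im+t)^2) / (N^2+t^2) := by
  have hNp : (0:ℝ) < N := lt_of_lt_of_le one_pos hN
  rw [fac_eq hN, map_div₀, map_mul, Complex.abs_ofReal, abs_of_pos (by positivity)]
  congr 2
  · rw [Complex.abs_apply, Complex.normSq_apply]
    congr 1
    simp [Complex.sub_re, Complex.sub_im, Complex.mul_re, Complex.mul_im]
    ring
  · rw [Complex.abs_apply, Complex.normSq_apply]
    congr 1
    simp [Complex.add_re, Complex.add_im, Complex.mul_re, Complex.mul_im]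
    ring

lemma sinfac_eq (hN : 1 ≤ N) (z : ℂ) :
    (1 - (z+Complex.I)^2/(N:ℂ)^2)
      = (((N:ℂ) - (z+Complex.I)) * ((N:ℂ) + (z+Complex.I))) / (((N^2:ℝ)):ℂ) := by
  have hNp : (0:ℝ) < N := lt_of_lt_of_le one_pos hN
  have hne : ((N:ℝ):ℂ) ≠ 0 := by exact_mod_cast (ne_of_gt (by exact_mod_cast hNp))
  push_cast
  field_simp
  ring

lemma abs_sinfac_eq (hN : 1 ≤ N) (z : ℂ) :
    Complex.abs (1 - (z+Complex.I)^2/(N:ℂ)^2)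
      = Real.sqrt ((N-z.re)^2+(z.im+1)^2) * Real.sqrt ((N+z.re)^2+(z.im+1)^2) / N^2 := by
  have hNp : (0:ℝ) < N := lt_of_lt_of_le one_pos hN
  rw [sinfac_eq hN, map_div₀, map_mul, Complex.abs_ofReal, abs_of_pos (by positivity)]
  congr 2
  · rw [Complex.abs_apply, Complex.normSq_apply]
    congr 1
    simp [Complex.sub_re, Complex.sub_im, Complex.add_re, Complex.add_im]
    ring
  · rw [Complex.abs_apply, Complex.normSq_apply]
    congr 1
    simp [Complex.add_re, Complex.add_im]
    ring



variable {N t : ℝ} {z : ℂ}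

lemma fac_upper (hN : 1 ≤ N) (ht0 : 0 ≤ t) (ht1 : t ≤ 1) (hy : 0 ≤ z.im) :
    Complex.abs ((1 - z/((N:ℂ) - Complex.I*(t:ℂ))) * (1 + z/((N:ℂ) + Complex.I*(t:ℂ))))
      ≤ Complex.abs (1 - (z+Complex.I)^2/(N:ℂ)^2) := by
  have hNp : (0:ℝ) < N := lt_of_lt_of_le one_pos hN
  rw [abs_fac_eq hN ht0 z, abs_sinfac_eq hN z]
  set x := z.re; set y := z.im
  have hsq : (y+t)^2 ≤ (y+1)^2 := by nlinarith
  have h1 : Real.sqrt ((N-x)^2+(y+t)^2) ≤ Real.sqrt ((N-x)^2+(y+1)^2) :=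
    Real.sqrt_le_sqrt (by linarith)
  have h2 : Real.sqrt ((N+x)^2+(y+t)^2) ≤ Real.sqrt ((N+x)^2+(y+1)^2) :=
    Real.sqrt_le_sqrt (by linarith)
  exact div_le_div₀ (by positivity)
    (mul_le_mul h1 h2 (Real.sqrt_nonneg _) (Real.sqrt_nonneg _))
    (by positivity) (by nlinarith)

lemma fac_lower (hN : 1 ≤ N) (ht0 : 0 ≤ t) (ht1 : t ≤ 1) (hy : 0 < z.im) :
    Complex.abs (1 - (z+Complex.I)^2/(N:ℂ)^2)
      ≤ Complex.abs ((1 - z/((N:ℂ) - Complex.I*(t:ℂ))) * (1 + z/((N:ℂ) + Complex.I*(t:ℂ))))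
        * Real.exp ((z.im+1)/((N-z.re)^2+z.im^2) + (z.im+1)/((N+z.re)^2+z.im^2) + 1/N^2) := by
  have hNp : (0:ℝ) < N := lt_of_lt_of_le one_pos hN
  rw [abs_fac_eq hN ht0 z, abs_sinfac_eq hN z]
  set x := z.re; set y := z.im
  have e1 := sqrt_ratio_le ((N-x)^2) (y+t) (y+1) y (sq_nonneg _) hy (by linarith) (by linarith)
    le_rfl
  have e2 := sqrt_ratio_le ((N+x)^2) (y+t) (y+1) y (sq_nonneg _) hy (by linarith) (by linarith)
    le_rfl
  have e3 : N^2 + t^2 ≤ N^2 * Real.exp (1/N^2) := by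
    have h1 : 1 + t^2/N^2 ≤ Real.exp (t^2/N^2) := one_add_le_exp
    have h2 : Real.exp (t^2/N^2) ≤ Real.exp (1/N^2) :=
      Real.exp_le_exp.2 ((div_le_div_iff_of_pos_right (by positivity)).2 (by nlinarith))
    have h3 : N^2*(1+t^2/N^2) = N^2+t^2 := by field_simp
    nlinarith [h1.trans h2]
  rw [div_mul_eq_mul_div, div_le_div_iff₀ (by positivity) (by positivity)]
  have hS2 : Real.sqrt ((N-x)^2+(y+1)^2) * Real.sqrt ((N+x)^2+(y+1)^2)
      ≤ (Real.sqrt ((N-x)^2+(y+t)^2) * Real.exp ((y+1)/((N-x)^2+y^2)))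
        * (Real.sqrt ((N+x)^2+(y+t)^2) * Real.exp ((y+1)/((N+x)^2+y^2))) :=
    mul_le_mul e1 e2 (Real.sqrt_nonneg _) (by positivity)
  calc Real.sqrt ((N-x)^2+(y+1)^2) * Real.sqrt ((N+x)^2+(y+1)^2) * (N^2+t^2)
      ≤ ((Real.sqrt ((N-x)^2+(y+t)^2) * Real.exp ((y+1)/((N-x)^2+y^2)))
        * (Real.sqrt ((N+x)^2+(y+t)^2) * Real.exp ((y+1)/((N+x)^2+y^2))))
        * (N^2 * Real.exp (1/N^2)) :=
        mul_le_mul hS2 e3 (by positivity) (by positivity)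
    _ = Real.sqrt ((N-x)^2+(y+t)^2) * Real.sqrt ((N+x)^2+(y+t)^2)
        * Real.exp ((y+1)/((N-x)^2+y^2) + (y+1)/((N+x)^2+y^2) + 1/N^2) * N^2 := by
        rw [Real.exp_add, Real.exp_add]; ring

lemma fac_sub_one {N t r : ℝ} {z : ℂ} (hN : 1 ≤ N) (ht0 : 0 ≤ t) (ht1 : t ≤ 1)
    (hz : Complex.abs z ≤ r) :
    Complex.abs ((1 - z/((N:ℂ) - Complex.I*(t:ℂ))) * (1 + z/((N:ℂ) + Complex.I*(t:ℂ))) - 1)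
      ≤ (r^2+2*r)/N^2 := by
  have hNp : (0:ℝ) < N := lt_of_lt_of_le one_pos hN
  have hr0 : 0 ≤ r := le_trans (Complex.abs.nonneg z) hz
  have hCne : ((N^2+t^2 : ℝ):ℂ) ≠ 0 := by
    rw [Complex.ofReal_ne_zero]; positivity
  have heq : (1 - z/((N:ℂ) - Complex.I*(t:ℂ))) * (1 + z/((N:ℂ) + Complex.I*(t:ℂ))) - 1
      = (-(z^2) - 2*Complex.I*(t:ℂ)*z)/((N^2+t^2 : ℝ):ℂ) := by
    rw [fac_eq hN, div_sub_one hCne]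
    congr 1
    linear_combination dprod N t
  rw [heq, map_div₀, Complex.abs_ofReal, abs_of_pos (by positivity)]
  have hnum : Complex.abs (-(z^2) - 2*Complex.I*(t:ℂ)*z) ≤ r^2 + 2*r := by
    calc Complex.abs (-(z^2) - 2*Complex.I*(t:ℂ)*z)
        ≤ Complex.abs (-(z^2)) + Complex.abs (2*Complex.I*(t:ℂ)*z) :=
          Complex.abs.sub_le_add _ _
      _ = Complex.abs z^2 + 2*t*Complex.abs z := by
          rw [Complex.abs.map_neg, map_mul, map_mul, map_mul, map_pow]
          rw [Complex.abs_two, Complex.abs_I, Complex.abs_ofReal, _root_.abs_of_nonneg ht0]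
          ring
      _ ≤ r^2 + 2*r := by nlinarith [Complex.abs.nonneg z]
  calc Complex.abs (-(z^2) - 2*Complex.I*(t:ℂ)*z) / (N^2+t^2)
      ≤ (r^2+2*r)/(N^2+t^2) := by
        exact div_le_div_of_nonneg_right hnum (by positivity) |>.trans le_rfl
    _ ≤ (r^2+2*r)/N^2 := by
        apply div_le_div_of_nonneg_left (by positivity) (by positivity) (by nlinarith)

noncomputable def tt (α : ℝ) (n : ℕ) : ℝ := ((n:ℝ)+1) ^ (-α)

lemma tt_pos (α : ℝ) (n : ℕ) : 0 < tt α n := Real.rpow_pos_of_pos (by positivity) _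

lemma tt_le_one {α : ℝ} (hα : 0 ≤ α) (n : ℕ) : tt α n ≤ 1 :=
  Real.rpow_le_one_of_one_le_of_nonpos (by push_cast; linarith) (by linarith)

noncomputable def fac (α : ℝ) (n : ℕ) (z : ℂ) : ℂ :=
  (1 - z / ((((n:ℝ)+1 : ℝ):ℂ) - Complex.I * ((tt α n : ℝ):ℂ))) *
  (1 + z / ((((n:ℝ)+1 : ℝ):ℂ) + Complex.I * ((tt α n : ℝ):ℂ)))

noncomputable def PP (α : ℝ) (m : ℕ) (z : ℂ) : ℂ :=
  (z + Complex.I) * ∏ n ∈ range m, fac α n z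

lemma hN1 (n : ℕ) : (1:ℝ) ≤ (n:ℝ)+1 := by have := Nat.cast_nonneg (α:=ℝ) n; linarith

lemma diffP (α : ℝ) (m : ℕ) : Differentiable ℂ (fun z => PP α m z) := by
  apply Differentiable.mul
  · exact differentiable_id.add_const Complex.I
  · induction m with
    | zero => simpa using differentiable_const (1:ℂ)
    | succ k ih =>
      have : (fun z => ∏ n ∈ range (k+1), fac α n z)
          = fun z => (∏ n ∈ range k, fac α n z) * fac α k z := by
        funext z; rw [Finset.prod_range_succ]
      rw [this]
      apply ih.mul
      unfold fac
      exact ((differentiable_const 1).sub (differentiable_id.div_const _)).mul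
        ((differentiable_const 1).add (differentiable_id.div_const _))

lemma fac_sub_one' {α r : ℝ} (hα : 0 ≤ α) (n : ℕ) {z : ℂ} (hz : Complex.abs z ≤ r) :
    Complex.abs (fac α n z - 1) ≤ (r^2+2*r)/((n:ℝ)+1)^2 :=
  fac_sub_one (hN1 n) (tt_pos α n).le (tt_le_one hα n) hz

lemma summable_bnd (r : ℝ) : Summable (fun n : ℕ => (r^2+2*r)/((n:ℝ)+1)^2) := by
  have := summable_inv_sq_add_one.mul_left (r^2+2*r)
  refine this.congr fun n => by rw [mul_one_div]

lemma abs_fac_le_one_add {α r : ℝ} (hα : 0 ≤ α) (n : ℕ) {z : ℂ} (hz : Complex.abs z ≤ r) :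
    Complex.abs (fac α n z) ≤ 1 + (r^2+2*r)/((n:ℝ)+1)^2 := by
  have h1 : Complex.abs (fac α n z) ≤ 1 + Complex.abs (fac α n z - 1) := by
    calc Complex.abs (fac α n z) = Complex.abs (1 + (fac α n z - 1)) := by ring_nf
      _ ≤ Complex.abs (1:ℂ) + Complex.abs (fac α n z - 1) := Complex.abs.add_le _ _
      _ = 1 + Complex.abs (fac α n z - 1) := by simp
  exact h1.trans (by linarith [fac_sub_one' hα n hz])

lemma ucauchy {α : ℝ} (hα : 0 ≤ α) (r : ℝ) (hr : 0 ≤ r) :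
    UniformCauchySeqOn (PP α) atTop (Metric.closedBall 0 r) := by
  rw [Metric.uniformCauchySeqOn_iff]
  intro ε hε
  set b : ℕ → ℝ := fun n => (r^2+2*r)/((n:ℝ)+1)^2 with hb
  have hsb : Summable b := summable_bnd r
  have hb0 : ∀ n, 0 ≤ b n := fun n => by simp only [hb]; positivity
  set T : ℝ := ∑' n, b n with hT
  have hT0 : 0 ≤ T := tsum_nonneg hb0
  set D : ℕ → ℝ := fun m => (r+1) * Real.exp T * (Real.exp (∑' n, b (n+m)) - 1) with hD
  have htD : Tendsto D atTop (𝓝 0) := by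
    have h1 : Tendsto (fun m => ∑' n, b (n+m)) atTop (𝓝 0) := tendsto_sum_nat_add b
    have h2 : Tendsto (fun m => Real.exp (∑' n, b (n+m)) - 1) atTop (𝓝 0) := by
      have := (Real.continuous_exp.tendsto 0).comp h1
      rw [Real.exp_zero] at this
      simpa using this.sub_const 1
    have := h2.const_mul ((r+1) * Real.exp T)
    simpa [hD, mul_comm] using this
  have hev : ∀ᶠ m in atTop, D m < ε := htD.eventually_lt_const hε
  obtain ⟨Nx, hNx⟩ := eventually_atTop.1 hev
  refine ⟨Nx, fun m hm m' hm' z hz => ?_⟩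
  have hzr : Complex.abs z ≤ r := by
    rw [Metric.mem_closedBall, Complex.dist_eq, sub_zero] at hz
    exact hz
  have key : ∀ m₁ m₂ : ℕ, m₁ ≤ m₂ → dist (PP α m₁ z) (PP α m₂ z) ≤ D m₁ := by
    intro m₁ m₂ h12
    have hsplit : PP α m₂ z = (z + Complex.I) * ((∏ n ∈ range m₁, fac α n z) *
        ∏ n ∈ Ico m₁ m₂, fac α n z) := by
      rw [PP, Finset.prod_range_mul_prod_Ico _ h12]
    have heq : PP α m₁ z - PP α m₂ z
        = -((z + Complex.I) * (∏ n ∈ range m₁, fac α n z) *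
            (∏ n ∈ Ico m₁ m₂, fac α n z - 1)) := by
      rw [hsplit, PP]; ring
    rw [dist_eq_norm]
    have habs : ‖PP α m₁ z - PP α m₂ z‖ = Complex.abs (z + Complex.I)
        * Complex.abs (∏ n ∈ range m₁, fac α n z)
        * Complex.abs (∏ n ∈ Ico m₁ m₂, fac α n z - 1) := by
      rw [heq, norm_neg]
      simp [Complex.norm_eq_abs, map_mul]
    rw [habs]
    have h1 : Complex.abs (z + Complex.I) ≤ r + 1 := by
      calc Complex.abs (z + Complex.I) ≤ Complex.abs z + Complex.abs Complex.I :=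
            Complex.abs.add_le _ _
        _ ≤ r + 1 := by rw [Complex.abs_I]; linarith
    have hsum_range : ∑ n ∈ range m₁, b n ≤ T := Summable.sum_le_tsum _ (fun i _ => hb0 i) hsb
    have h2 : Complex.abs (∏ n ∈ range m₁, fac α n z) ≤ Real.exp T := by
      calc Complex.abs (∏ n ∈ range m₁, fac α n z)
          = ∏ n ∈ range m₁, Complex.abs (fac α n z) := map_prod _ _ _
        _ ≤ ∏ n ∈ range m₁, (1 + b n) :=
            Finset.prod_le_prod (fun i _ => Complex.abs.nonneg _)
              (fun i _ => abs_fac_le_one_add hα i hzr)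
        _ ≤ Real.exp (∑ n ∈ range m₁, b n) := prod_one_add_le_exp _ _ hb0
        _ ≤ Real.exp T := Real.exp_le_exp.2 hsum_range
    have hsum_Ico : ∑ n ∈ Ico m₁ m₂, b n ≤ ∑' n, b (n+m₁) := by
      have hsb' : Summable (fun n => b (n+m₁)) := (summable_nat_add_iff m₁).2 hsb
      rw [Finset.sum_Ico_eq_sum_range]
      calc ∑ k ∈ range (m₂-m₁), b (m₁+k) = ∑ k ∈ range (m₂-m₁), b (k+m₁) := by
            exact Finset.sum_congr rfl fun k _ => by rw [add_comm]
        _ ≤ ∑' n, b (n+m₁) := Summable.sum_le_tsum _ (fun i _ => hb0 _) hsb'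
    have h3 : Complex.abs (∏ n ∈ Ico m₁ m₂, fac α n z - 1)
        ≤ Real.exp (∑' n, b (n+m₁)) - 1 := by
      calc Complex.abs (∏ n ∈ Ico m₁ m₂, fac α n z - 1)
          ≤ ∏ n ∈ Ico m₁ m₂, (1 + Complex.abs (fac α n z - 1)) - 1 :=
            prod_sub_one_abs_le _ _
        _ ≤ ∏ n ∈ Ico m₁ m₂, (1 + b n) - 1 := by
            refine sub_le_sub_right ?_ 1
            exact Finset.prod_le_prod (fun i _ => by positivity)
              (fun i _ => by linarith [fac_sub_one' hα i hzr])
        _ ≤ Real.exp (∑ n ∈ Ico m₁ m₂, b n) - 1 :=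
            sub_le_sub_right (prod_one_add_le_exp _ _ hb0) 1
        _ ≤ Real.exp (∑' n, b (n+m₁)) - 1 :=
            sub_le_sub_right (Real.exp_le_exp.2 hsum_Ico) 1
    calc Complex.abs (z + Complex.I) * Complex.abs (∏ n ∈ range m₁, fac α n z)
          * Complex.abs (∏ n ∈ Ico m₁ m₂, fac α n z - 1)
        ≤ (r+1) * Real.exp T * (Real.exp (∑' n, b (n+m₁)) - 1) := by
          have hmm : Complex.abs (z + Complex.I) * Complex.abs (∏ n ∈ range m₁, fac α n z)
              ≤ (r+1) * Real.exp T :=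
            mul_le_mul h1 h2 (Complex.abs.nonneg _) (by positivity)
          refine mul_le_mul hmm h3 (Complex.abs.nonneg _) (by positivity)
      _ = D m₁ := rfl
  rcases le_total m m' with h | h
  · exact lt_of_le_of_lt ((key m m' h).trans_eq rfl) (hNx m hm)
  · rw [dist_comm]
    exact lt_of_le_of_lt ((key m' m h).trans_eq rfl) (hNx m' hm')

lemma exp_sum_bound (x y ε : ℝ) (hε : 0 < ε) (hy : ε ≤ y) (m : ℕ) :
    ∑ n ∈ range m, ((y+1)/((((n:ℝ)+1)-x)^2+y^2) + (y+1)/((((n:ℝ)+1)+x)^2+y^2)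
      + 1/((n:ℝ)+1)^2) ≤ 10 + 20/ε + 12/ε^2 := by
  have hy0 : 0 < y := lt_of_lt_of_le hε hy
  have hsv := summable_v y hy0
  have htv := tsum_v_le y hy0
  have htv0 : 0 ≤ ∑' j : ℕ, 1/((j:ℝ)^2 + y^2) := tsum_nonneg fun j => by positivity
  rw [Finset.sum_add_distrib, Finset.sum_add_distrib]
  have hA : ∑ n ∈ range m, (y+1)/((((n:ℝ)+1)-x)^2+y^2) ≤ (y+1)*(2*(2/y+3/y^2)) := by
    have h1 : ∀ n:ℕ, (y+1)/((((n:ℝ)+1)-x)^2+y^2) = (y+1)*(1/((((1-x))+(n:ℝ))^2+y^2)) :=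
      fun n => by rw [mul_one_div]; congr 2; ring
    calc ∑ n ∈ range m, (y+1)/((((n:ℝ)+1)-x)^2+y^2)
        = (y+1) * ∑ n ∈ range m, 1/(((1-x)+(n:ℝ))^2+y^2) := by
          rw [Finset.mul_sum]; exact Finset.sum_congr rfl fun n _ => h1 n
      _ ≤ (y+1) * (2 * ∑' j : ℕ, 1/((j:ℝ)^2 + y^2)) :=
          mul_le_mul_of_nonneg_left (sum_shift_le (1-x) y hy0 hsv m) (by linarith)
      _ ≤ (y+1) * (2*(2/y+3/y^2)) := by
          refine mul_le_mul_of_nonneg_left (by linarith) (by linarith)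
  have hB : ∑ n ∈ range m, (y+1)/((((n:ℝ)+1)+x)^2+y^2) ≤ (y+1)*(2*(2/y+3/y^2)) := by
    have h1 : ∀ n:ℕ, (y+1)/((((n:ℝ)+1)+x)^2+y^2) = (y+1)*(1/((((1+x))+(n:ℝ))^2+y^2)) :=
      fun n => by rw [mul_one_div]; congr 2; ring
    calc ∑ n ∈ range m, (y+1)/((((n:ℝ)+1)+x)^2+y^2)
        = (y+1) * ∑ n ∈ range m, 1/(((1+x)+(n:ℝ))^2+y^2) := by
          rw [Finset.mul_sum]; exact Finset.sum_congr rfl fun n _ => h1 n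
      _ ≤ (y+1) * (2 * ∑' j : ℕ, 1/((j:ℝ)^2 + y^2)) :=
          mul_le_mul_of_nonneg_left (sum_shift_le (1+x) y hy0 hsv m) (by linarith)
      _ ≤ (y+1) * (2*(2/y+3/y^2)) := by
          refine mul_le_mul_of_nonneg_left (by linarith) (by linarith)
  have hC := sum_inv_succ_sq_le m
  have he : (y+1)*(2*(2/y+3/y^2)) = 4 + 10/y + 6/y^2 := by field_simp; ring
  have h1y : 1/y ≤ 1/ε := one_div_le_one_div_of_le hε hy
  have h1y2 : 1/y^2 ≤ 1/ε^2 := one_div_le_one_div_of_le (by positivity) (by nlinarith)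
  have h20 : 10/y = 10*(1/y) := by ring
  have h20' : 20/ε = 20*(1/ε) := by ring
  have h12 : 6/y^2 = 6*(1/y^2) := by ring
  have h12' : 12/ε^2 = 12*(1/ε^2) := by ring
  rw [he] at hA hB
  linarith

end Stmt15Aux


open Filter Stmt15Aux

theorem stmt_15 (α : ℝ) (hα : α ∈ Set.Icc (0:ℝ) 2) :
    ∃ E : ℂ → ℂ,
      TendstoLocallyUniformly
        (fun (m : ℕ) (z : ℂ) => (z + Complex.I) *
          ∏ n ∈ Finset.range m,
            ((1 - z / ((((n : ℝ) + 1 : ℝ) : ℂ) -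
                Complex.I * ((((n : ℝ) + 1) ^ (-α) : ℝ) : ℂ))) *
             (1 + z / ((((n : ℝ) + 1 : ℝ) : ℂ) +
                Complex.I * ((((n : ℝ) + 1) ^ (-α) : ℝ) : ℂ)))))
        E atTop ∧
      Differentiable ℂ E ∧
      ∀ ε > (0:ℝ), ∃ c C : ℝ, 0 < c ∧ c ≤ C ∧ ∀ z : ℂ, ε ≤ z.im →
        c * Real.exp (Real.pi * z.im) ≤ ‖E z‖ ∧
        ‖E z‖ ≤ C * Real.exp (Real.pi * z.im) := by
  obtain ⟨hα0, hα2⟩ := hα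
  have hcau : ∀ z : ℂ, CauchySeq (fun m => PP α m z) := fun z =>
    (ucauchy hα0 (Complex.abs z) (Complex.abs.nonneg z)).cauchySeq
      (by rw [Metric.mem_closedBall, Complex.dist_eq, sub_zero]; exact le_rfl)
  set E : ℂ → ℂ := fun z => limUnder atTop (fun m => PP α m z) with hEdef
  have hE : ∀ z, Tendsto (fun m => PP α m z) atTop (𝓝 (E z)) := fun z =>
    (hcau z).tendsto_limUnder
  have hTLU : TendstoLocallyUniformly (PP α) E atTop := by
    rw [tendstoLocallyUniformly_iff_forall_isCompact]
    intro K hK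
    obtain ⟨r, hr⟩ := hK.isBounded.subset_closedBall 0
    have hsub : K ⊆ Metric.closedBall 0 (max r 0) :=
      hr.trans (Metric.closedBall_subset_closedBall (le_max_left _ _))
    exact ((ucauchy hα0 (max r 0) (le_max_right _ _)).tendstoUniformlyOn_of_tendsto
      (fun z _ => hE z)).mono hsub
  refine ⟨E, hTLU, ?_, ?_⟩
  · have h1 : TendstoLocallyUniformlyOn (PP α) E atTop Set.univ :=
      tendstoLocallyUniformlyOn_univ.2 hTLU
    have h2 := h1.differentiableOn (Eventually.of_forall fun m => (diffP α m).differentiableOn)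
      isOpen_univ
    exact differentiableOn_univ.1 h2
  · intro ε hε
    set M : ℝ := 10 + 20/ε + 12/ε^2 with hM
    have hM0 : 0 < M := by positivity
    have hexp2pi : Real.exp (-2*Real.pi) < 1 := by
      rw [Real.exp_lt_one_iff]; nlinarith [Real.pi_pos]
    have hπ := Real.pi_pos
    set C : ℝ := Real.exp Real.pi / Real.pi with hC
    set c : ℝ := ((1 - Real.exp (-2*Real.pi))/2 * Real.exp (-M))
      * (Real.exp Real.pi / Real.pi) with hc
    have hC0 : 0 < C := by rw [hC]; positivity
    have hc0 : 0 < c := by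
      rw [hc]
      have h1 : 0 < 1 - Real.exp (-2*Real.pi) := by linarith
      positivity
    have hcC : c ≤ C := by
      rw [hc, hC]
      have h1 : Real.exp (-M) ≤ 1 := Real.exp_le_one_iff.2 (by linarith)
      have h2 : (1 - Real.exp (-2*Real.pi))/2 * Real.exp (-M) ≤ 1 := by
        nlinarith [Real.exp_pos (-2*Real.pi), Real.exp_pos (-M)]
      exact mul_le_of_le_one_left (by positivity) h2
    refine ⟨c, C, hc0, hcC, ?_⟩
    intro z hz
    have hy0 : 0 < z.im := lt_of_lt_of_le hε hz
    set u : ℂ := z + Complex.I with hu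
    have huim : u.im = z.im + 1 := by simp [hu]
    -- limits
    have hlim : Tendsto (fun m => Complex.abs (PP α m z)) atTop (𝓝 (Complex.abs (E z))) :=
      (Complex.continuous_abs.continuousAt.tendsto).comp (hE z)
    set sU : ℕ → ℝ := fun m => Complex.abs (z + Complex.I)
      * ∏ n ∈ Finset.range m, Complex.abs (1 - (z+Complex.I)^2/((((n:ℝ)+1 : ℝ):ℂ))^2)
      with hsU
    have h0 := (Complex.continuous_abs.continuousAt.tendsto).comp
      (Complex.tendsto_euler_sin_prod u)
    have heq : ∀ m : ℕ, Complex.abs ((Real.pi:ℂ) * u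
        * ∏ j ∈ Finset.range m, (1 - u^2/((j:ℂ)+1)^2)) = Real.pi * sU m := by
      intro m
      rw [map_mul, map_mul, Complex.abs_ofReal, abs_of_pos hπ, map_prod, hsU, hu]
      rw [mul_assoc]
      congr 2
      exact Finset.prod_congr rfl fun j _ => by norm_cast
    have h1 : Tendsto (fun m => Real.pi * sU m) atTop
        (𝓝 (Complex.abs (Complex.sin ((Real.pi:ℂ) * u)))) := by
      refine Tendsto.congr (fun m => heq m) h0
    have hsU_lim : Tendsto sU atTop
        (𝓝 (Complex.abs (Complex.sin ((Real.pi:ℂ) * u)) / Real.pi)) := by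
      have h2 := h1.const_mul (Real.pi⁻¹)
      refine Tendsto.congr (fun m => ?_) (by simpa [div_eq_inv_mul] using h2)
      field_simp
    -- factorwise comparison
    have h_upper : ∀ m, Complex.abs (PP α m z) ≤ sU m := by
      intro m
      rw [PP, map_mul, map_prod, hsU]
      refine mul_le_mul_of_nonneg_left ?_ (Complex.abs.nonneg _)
      refine Finset.prod_le_prod (fun n _ => Complex.abs.nonneg _) (fun n _ => ?_)
      exact fac_upper (hN1 n) (tt_pos α n).le (tt_le_one hα0 n) hy0.le
    have h_lower : ∀ m, sU m ≤ Complex.abs (PP α m z) * Real.exp M := by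
      intro m
      rw [PP, map_mul, map_prod, hsU]
      rw [mul_assoc]
      refine mul_le_mul_of_nonneg_left ?_ (Complex.abs.nonneg _)
      calc ∏ n ∈ Finset.range m, Complex.abs (1 - (z+Complex.I)^2/((((n:ℝ)+1 : ℝ):ℂ))^2)
          ≤ ∏ n ∈ Finset.range m, (Complex.abs (fac α n z)
              * Real.exp ((z.im+1)/((((n:ℝ)+1)-z.re)^2+z.im^2)
                + (z.im+1)/((((n:ℝ)+1)+z.re)^2+z.im^2) + 1/((n:ℝ)+1)^2)) := by
            refine Finset.prod_le_prod (fun n _ => Complex.abs.nonneg _) (fun n _ => ?_)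
            exact fac_lower (hN1 n) (tt_pos α n).le (tt_le_one hα0 n) hy0
        _ = (∏ n ∈ Finset.range m, Complex.abs (fac α n z))
            * Real.exp (∑ n ∈ Finset.range m, ((z.im+1)/((((n:ℝ)+1)-z.re)^2+z.im^2)
                + (z.im+1)/((((n:ℝ)+1)+z.re)^2+z.im^2) + 1/((n:ℝ)+1)^2)) := by
            rw [Finset.prod_mul_distrib, Real.exp_sum]
        _ ≤ (∏ n ∈ Finset.range m, Complex.abs (fac α n z)) * Real.exp M := by
            refine mul_le_mul_of_nonneg_left ?_
              (Finset.prod_nonneg fun n _ => Complex.abs.nonneg _)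
            exact Real.exp_le_exp.2 (by rw [hM]; exact exp_sum_bound z.re z.im ε hε hz m)
    -- pass to the limit
    have hEupper : Complex.abs (E z)
        ≤ Complex.abs (Complex.sin ((Real.pi:ℂ) * u)) / Real.pi :=
      le_of_tendsto_of_tendsto' hlim hsU_lim h_upper
    have hElower : Complex.abs (Complex.sin ((Real.pi:ℂ) * u)) / Real.pi * Real.exp (-M)
        ≤ Complex.abs (E z) := by
      refine le_of_tendsto_of_tendsto' (hsU_lim.mul_const _) hlim (fun m => ?_)
      calc sU m * Real.exp (-M)
          ≤ (Complex.abs (PP α m z) * Real.exp M) * Real.exp (-M) :=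
            mul_le_mul_of_nonneg_right (h_lower m) (Real.exp_pos _).le
        _ = Complex.abs (PP α m z) := by
            rw [mul_assoc, ← Real.exp_add]; simp
    -- sin estimates
    set w : ℂ := (Real.pi:ℂ) * u with hw
    have hwim : w.im = Real.pi * (z.im + 1) := by
      rw [hw]
      simp [Complex.mul_im, huim]
    have hπw : Real.pi ≤ w.im := by rw [hwim]; nlinarith
    have h0w : (0:ℝ) ≤ w.im := by linarith
    constructor
    · calc c * Real.exp (Real.pi * z.im)
          = (1 - Real.exp (-2*Real.pi))/2 * Real.exp w.im / Real.pi * Real.exp (-M) := by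
            rw [hc, hwim, show Real.pi * (z.im+1) = Real.pi*z.im + Real.pi by ring,
              Real.exp_add]
            field_simp
        _ ≤ Complex.abs (Complex.sin w) / Real.pi * Real.exp (-M) := by
            refine mul_le_mul_of_nonneg_right ?_ (Real.exp_pos _).le
            exact (div_le_div_iff_of_pos_right hπ).2 (le_abs_sin hπw)
        _ ≤ Complex.abs (E z) := hElower
    · calc Complex.abs (E z) ≤ Complex.abs (Complex.sin w) / Real.pi := hEupper
        _ ≤ Real.exp w.im / Real.pi := by
            exact (div_le_div_iff_of_pos_right hπ).2 (abs_sin_le h0w)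
        _ = C * Real.exp (Real.pi * z.im) := by
            rw [hwim, hC, show Real.pi * (z.im+1) = Real.pi*z.im + Real.pi by ring,
              Real.exp_add]
            field_simp
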